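/- Key inequality step in the coercivity proof: if ‖Sp‖_T ≤ ‖p‖_T, ‖Πx‖_T = ‖x‖_T, and Re((p, (Id + ΠS)p)_T) = 0 for some p, then ‖(Id + ΠS)p‖_T = 0; consequently, whenever Id + ΠS is injective, Re((p, (Id + ΠS)p)_T) > 0 for all p ≠ 0. -/

import Mathlib

open Matrix ComplexOrder

/-- The `T`-norm `‖x‖_T = √(xᴴTx)`. -/
noncomputable def Tnorm {n : ℕ} (T : Matrix (Fin n) (Fin n) ℂ) (x : Fin n → ℂ) : ℝ :=
  Real.sqrt (star x ⬝ᵥ T *ᵥ x).re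

private noncomputable def vecCore {n : ℕ} {T : Matrix (Fin n) (Fin n) ℂ} (hT : T.PosDef) :
    InnerProductSpace.Core ℂ (Fin n → ℂ) where
  inner x y := star x ⬝ᵥ T *ᵥ y
  conj_inner_symm x y := by
    rw [starRingEnd_apply, star_dotProduct, star_star, star_mulVec, dotProduct_mulVec,
      hT.isHermitian.eq]
  re_inner_nonneg x := hT.posSemidef.re_dotProduct_nonneg x
  add_left x y z := by simp [star_add, add_dotProduct]
  smul_left x y r := by simp [star_smul, smul_dotProduct]
  definite x hx := by
    by_contra hne
    have := hT.re_dotProduct_pos hne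
    rw [hx] at this
    simp at this

private noncomputable def vecNAG {n : ℕ} {T : Matrix (Fin n) (Fin n) ℂ} (hT : T.PosDef) :
    NormedAddCommGroup (Fin n → ℂ) :=
  @InnerProductSpace.Core.toNormedAddCommGroup _ _ _ _ _ (vecCore hT)

private noncomputable def vecIPS {n : ℕ} {T : Matrix (Fin n) (Fin n) ℂ} (hT : T.PosDef) :
    @InnerProductSpace ℂ (Fin n → ℂ) _ (vecNAG hT).toSeminormedAddCommGroup :=
  @InnerProductSpace.ofCore _ _ _ _ _ (vecCore hT).toCore

private lemma aux_key {E : Type*} [NormedAddCommGroup E] [InnerProductSpace ℂ E] (p e : E)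
    (hen : ‖e‖ ≤ ‖p‖) :
    0 ≤ RCLike.re (inner ℂ (p + e) p : ℂ) ∧
      (RCLike.re (inner ℂ (p + e) p : ℂ) = 0 → ‖p + e‖ = 0) := by
  have hsplit : RCLike.re (inner ℂ (p + e) p : ℂ)
      = ‖p‖ ^ 2 + RCLike.re (inner ℂ e p : ℂ) := by
    rw [inner_add_left, map_add, inner_self_eq_norm_sq]
  have habs : |RCLike.re (inner ℂ e p : ℂ)| ≤ ‖e‖ * ‖p‖ :=
    (RCLike.abs_re_le_norm _).trans (norm_inner_le_norm e p)
  have hb := abs_le.mp habs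
  have hp2 : ‖e‖ * ‖p‖ ≤ ‖p‖ ^ 2 := by nlinarith [norm_nonneg p, norm_nonneg e]
  constructor
  · rw [hsplit]; linarith [hb.1]
  · intro h0
    have hep : RCLike.re (inner ℂ e p : ℂ) = -(‖p‖ ^ 2) := by
      rw [hsplit] at h0; linarith
    have hpe : RCLike.re (inner ℂ p e : ℂ) = -(‖p‖ ^ 2) := by
      rw [inner_re_symm]; exact hep
    have hsq : ‖p + e‖ ^ 2 = ‖p‖ ^ 2 + 2 * RCLike.re (inner ℂ p e : ℂ) + ‖e‖ ^ 2 :=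
      norm_add_sq p e
    have : ‖p + e‖ ^ 2 ≤ 0 := by
      rw [hsq, hpe]; nlinarith [norm_nonneg p, norm_nonneg e]
    nlinarith [norm_nonneg (p + e), sq_nonneg ‖p + e‖]

/-- Key inequality step: for a `T`-isometric involution `Ex` and a `T`-non-expansive `S`,
if `Re((p,(Id+Ex·S)p)_T) = 0` then `‖(Id+Ex·S)p‖_T = 0`; consequently, whenever
`Id + Ex·S` is injective, `Re((p,(Id+Ex·S)p)_T) > 0` for all `p ≠ 0`. -/
theorem stmt9 {M : ℕ} (T Ex S : Matrix (Fin M) (Fin M) ℂ) (hT : T.PosDef)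
    (hEx : Ex * Ex = 1)
    (hExIso : ∀ x : Fin M → ℂ, Tnorm T (Ex *ᵥ x) = Tnorm T x)
    (hSne : ∀ x : Fin M → ℂ, Tnorm T (S *ᵥ x) ≤ Tnorm T x) :
    (∀ p : Fin M → ℂ,
      (star ((1 + Ex * S) *ᵥ p) ⬝ᵥ T *ᵥ p).re = 0 →
        Tnorm T ((1 + Ex * S) *ᵥ p) = 0) ∧
    (Function.Injective (1 + Ex * S).mulVec →
      ∀ p : Fin M → ℂ, p ≠ 0 → 0 < (star ((1 + Ex * S) *ᵥ p) ⬝ᵥ T *ᵥ p).re) := by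
  letI nag : NormedAddCommGroup (Fin M → ℂ) := vecNAG hT
  letI ipc : @InnerProductSpace ℂ (Fin M → ℂ) _ nag.toSeminormedAddCommGroup := vecIPS hT
  have hTn : ∀ x : Fin M → ℂ, Tnorm T x = @norm _ nag.toNorm x := by
    intro x
    rfl
  have hq : ∀ p : Fin M → ℂ, (1 + Ex * S) *ᵥ p = p + Ex *ᵥ (S *ᵥ p) := by
    intro p
    rw [Matrix.add_mulVec, Matrix.one_mulVec, ← Matrix.mulVec_mulVec]
  have hen : ∀ p : Fin M → ℂ,
      @norm _ nag.toNorm (Ex *ᵥ (S *ᵥ p)) ≤ @norm _ nag.toNorm p := by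
    intro p
    have h1 := hSne p
    have h3 := hExIso (S *ᵥ p)
    rw [hTn, hTn] at h1
    rw [hTn, hTn] at h3
    linarith
  have hconv : ∀ p : Fin M → ℂ,
      RCLike.re (@inner ℂ _ ipc.toInner (p + Ex *ᵥ (S *ᵥ p)) p)
        = (star ((1 + Ex * S) *ᵥ p) ⬝ᵥ T *ᵥ p).re := by
    intro p
    rw [hq p]
    rfl
  have key : ∀ p : Fin M → ℂ,
      (star ((1 + Ex * S) *ᵥ p) ⬝ᵥ T *ᵥ p).re = 0 →
        Tnorm T ((1 + Ex * S) *ᵥ p) = 0 := by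
    intro p hp
    have h := (@aux_key _ nag ipc p (Ex *ᵥ (S *ᵥ p)) (hen p)).2
      (by exact (hconv p).trans hp)
    rw [hTn, hq p]
    exact h
  refine ⟨key, ?_⟩
  intro hinj p hp0
  have h0 := (@aux_key _ nag ipc p (Ex *ᵥ (S *ᵥ p)) (hen p)).1
  replace h0 := h0.trans_eq (hconv p)
  rcases h0.lt_or_eq with h | h
  · exact h
  · exfalso
    have h1 := key p h.symm
    have h2 : (1 + Ex * S) *ᵥ p = 0 := by
      by_contra hne
      have hpos := hT.re_dotProduct_pos hne
      have : (0 : ℝ) < Tnorm T ((1 + Ex * S) *ᵥ p) := Real.sqrt_pos.mpr hpos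
      linarith [this, h1.ge, this.trans_eq h1]
    have h3 : (1 + Ex * S) *ᵥ p = (1 + Ex * S) *ᵥ 0 := by
      rw [h2, Matrix.mulVec_zero]
    exact hp0 (hinj h3)
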